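/- arXiv:1601.07403 — 6 statements merged into one kernel-verified Lean document; each statement's English description precedes it below -/
import Mathlib

section
/- Let A be a finite idempotent algebra with at least 3 elements, and let ≤ be a compatible partial order on A whose comparability graph is connected (any two elements of A are joined by a finite sequence of elements in which consecutive elements are comparable). Then the hypergraph H(A) is connected: any two elements of A are connected in H(A). -/
namespace UA

/-- Terms over a signature `(ι, ar)` with `n` variables. -/
inductive Term (ι : Type) (ar : ι → ℕ) (n : ℕ) : Type where
  | var : Fin n → Term ι ar n
  | app : (i : ι) → (Fin (ar i) → Term ι ar n) → Term ι ar n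

/-- Evaluation of a term in an algebra with operations `ops`. -/
def Term.eval {ι : Type} {ar : ι → ℕ} {A : Type} (ops : ∀ i : ι, (Fin (ar i) → A) → A)
    {n : ℕ} : Term ι ar n → (Fin n → A) → A
  | .var j, x => x j
  | .app i ts, x => ops i fun k => Term.eval ops (ts k) x

variable {ι : Type} {ar : ι → ℕ} {A : Type}

/-- An algebra is idempotent if every basic operation is. -/
def Idempotent (ops : ∀ i : ι, (Fin (ar i) → A) → A) : Prop :=
  ∀ (i : ι) (x : A), ops i (fun _ => x) = x

/-- A subuniverse: a subset closed under all basic operations. -/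
def IsSubuniverse (ops : ∀ i : ι, (Fin (ar i) → A) → A) (S : Set A) : Prop :=
  ∀ (i : ι) (xs : Fin (ar i) → A), (∀ k, xs k ∈ S) → ops i xs ∈ S

/-- The subuniverse generated by `X`. -/
def Sg (ops : ∀ i : ι, (Fin (ar i) → A) → A) (X : Set A) : Set A :=
  ⋂₀ {S | IsSubuniverse ops S ∧ X ⊆ S}

/-- A tolerance: a reflexive symmetric compatible binary relation. -/
def IsTolerance (ops : ∀ i : ι, (Fin (ar i) → A) → A) (τ : A → A → Prop) : Prop :=
  (∀ x, τ x x) ∧ (∀ x y, τ x y → τ y x) ∧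
  ∀ (i : ι) (xs ys : Fin (ar i) → A), (∀ k, τ (xs k) (ys k)) → τ (ops i xs) (ops i ys)

/-- A congruence: a compatible equivalence relation. -/
def IsCongruence (ops : ∀ i : ι, (Fin (ar i) → A) → A) (θ : A → A → Prop) : Prop :=
  Equivalence θ ∧
  ∀ (i : ι) (xs ys : Fin (ar i) → A), (∀ k, θ (xs k) (ys k)) → θ (ops i xs) (ops i ys)

/-- A congruence of the subalgebra with universe `B`, viewed as a partial
equivalence relation on the big algebra whose domain is exactly `B` and which is
compatible with all operations. -/
def IsCongruenceOn (ops : ∀ i : ι, (Fin (ar i) → A) → A) (B : Set A)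
    (θ : A → A → Prop) : Prop :=
  (∀ x y, θ x y → x ∈ B ∧ y ∈ B) ∧
  (∀ x ∈ B, θ x x) ∧
  (∀ x y, θ x y → θ y x) ∧
  (∀ x y z, θ x y → θ y z → θ x z) ∧
  ∀ (i : ι) (xs ys : Fin (ar i) → A), (∀ k, θ (xs k) (ys k)) → θ (ops i xs) (ops i ys)

/-- `f` is a binary term operation of the algebra. -/
def IsTermOp2 (ops : ∀ i : ι, (Fin (ar i) → A) → A) (f : A → A → A) : Prop :=
  ∃ t : Term ι ar 2, ∀ x y, f x y = t.eval ops ![x, y]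

/-- `g` is a ternary term operation of the algebra. -/
def IsTermOp3 (ops : ∀ i : ι, (Fin (ar i) → A) → A) (g : A → A → A → A) : Prop :=
  ∃ t : Term ι ar 3, ∀ x y z, g x y z = t.eval ops ![x, y, z]

/-- Connectivity of `a` and `b` in the hypergraph `H(A)` whose hyperedges are the
nonempty proper subuniverses: a chain of hyperedges with consecutive ones
intersecting, the first containing `a`, the last containing `b`. -/
def HConnected (ops : ∀ i : ι, (Fin (ar i) → A) → A) (a b : A) : Prop :=
  ∃ L : List (Set A),
    (∀ S ∈ L, IsSubuniverse ops S ∧ S.Nonempty ∧ S ≠ Set.univ) ∧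
    L.Chain' (fun S T => (S ∩ T).Nonempty) ∧
    ∃ h : L ≠ [], a ∈ L.head h ∧ b ∈ L.getLast h


lemma hconn_trans {ι : Type} {ar : ι → ℕ} {A : Type}
    {ops : ∀ i : ι, (Fin (ar i) → A) → A} {a b c : A}
    (h1 : HConnected ops a b) (h2 : HConnected ops b c) : HConnected ops a c := by
  obtain ⟨L1, hS1, hc1, h1ne, ha, hb⟩ := h1
  obtain ⟨L2, hS2, hc2, h2ne, hb', hc⟩ := h2
  refine ⟨L1 ++ L2, ?_, ?_, by simp [h1ne], ?_, ?_⟩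
  · intro S hS
    rcases List.mem_append.mp hS with h | h
    exacts [hS1 S h, hS2 S h]
  · refine List.isChain_append.mpr ?_
    refine ⟨hc1, hc2, ?_⟩
    intro x hx y hy
    rw [List.getLast?_eq_getLast h1ne, Option.mem_def, Option.some_inj] at hx
    rw [List.head?_eq_head h2ne, Option.mem_def, Option.some_inj] at hy
    exact ⟨b, by rw [← hx, ← hy] at *; exact ⟨hb, hb'⟩⟩
  · rw [List.head_append_of_ne_nil h1ne]; exact ha
  · rw [List.getLast_append_of_ne_nil _ h2ne]; exact hc

/-- a finite idempotent algebra of size ≥ 3 with a compatible partial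
order whose comparability graph is connected has a connected hypergraph H(A). -/
theorem stmt_3 {ι : Type} {ar : ι → ℕ} {A : Type} [Fintype A] [Nonempty A]
    (hcard : 3 ≤ Fintype.card A)
    (ops : ∀ i : ι, (Fin (ar i) → A) → A)
    (hidem : Idempotent ops)
    (le : A → A → Prop)
    (hrefl : ∀ x, le x x)
    (hantisymm : ∀ x y, le x y → le y x → x = y)
    (htrans : ∀ x y z, le x y → le y z → le x z)
    (hcompat : ∀ (i : ι) (xs ys : Fin (ar i) → A),
      (∀ k, le (xs k) (ys k)) → le (ops i xs) (ops i ys))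
    (hconn : ∀ x y : A, Relation.ReflTransGen (fun u v => le u v ∨ le v u) x y) :
    ∀ a b : A, HConnected ops a b := by
  -- up-sets and down-sets are subuniverses
  have hup : ∀ a : A, IsSubuniverse ops {x | le a x} := by
    intro a i xs h
    have := hcompat i (fun _ => a) xs h
    rwa [hidem i a] at this
  have hdown : ∀ a : A, IsSubuniverse ops {x | le x a} := by
    intro a i xs h
    have := hcompat i xs (fun _ => a) h
    rwa [hidem i a] at this
  -- there exists an element distinct from any two given ones
  have hthird : ∀ a b : A, ∃ c : A, c ≠ a ∧ c ≠ b := by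
    classical
    intro a b
    have hsub : ({a, b} : Finset A) ⊆ Finset.univ := Finset.subset_univ _
    have hcard2 : ({a, b} : Finset A).card ≤ 2 := by
      apply le_trans (Finset.card_insert_le _ _); simp
    have : 0 < (Finset.univ \ {a, b} : Finset A).card := by
      rw [Finset.card_sdiff_of_subset hsub]
      have := Finset.card_univ (α := A)
      omega
    obtain ⟨c, hc⟩ := Finset.card_pos.mp this
    simp only [Finset.mem_sdiff, Finset.mem_insert, Finset.mem_singleton] at hc
    exact ⟨c, fun h => hc.2 (Or.inl h), fun h => hc.2 (Or.inr h)⟩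
  -- connecting comparable elements
  have key : ∀ a b : A, le a b → HConnected ops a b ∧ HConnected ops b a := by
    intro a b hab
    by_cases hua : {x | le a x} ≠ Set.univ
    · have : HConnected ops a b ∧ HConnected ops b a := by
        constructor <;>
          exact ⟨[{x | le a x}], by
              rintro S hS
              simp only [List.mem_singleton] at hS
              subst hS
              exact ⟨hup a, ⟨a, hrefl a⟩, hua⟩,
            List.isChain_singleton _, by simp, by first
              | exact ⟨hrefl a, hab⟩ | exact ⟨hab, hrefl a⟩⟩
      exact this
    · push_neg at hua
      have hamin : ∀ x, le a x := fun x => (Set.eq_univ_iff_forall.mp hua) x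
      by_cases hdb : {x | le x b} ≠ Set.univ
      · constructor <;>
          exact ⟨[{x | le x b}], by
              rintro S hS
              simp only [List.mem_singleton] at hS
              subst hS
              exact ⟨hdown b, ⟨b, hrefl b⟩, hdb⟩,
            List.isChain_singleton _, by simp, by first
              | exact ⟨hab, hrefl b⟩ | exact ⟨hrefl b, hab⟩⟩
      · push_neg at hdb
        have hbmax : ∀ x, le x b := fun x => (Set.eq_univ_iff_forall.mp hdb) x
        obtain ⟨c, hca, hcb⟩ := hthird a b
        have hdcp : {x | le x c} ≠ Set.univ := by
          intro h
          exact hcb (hantisymm c b (hbmax c) ((Set.eq_univ_iff_forall.mp h) b))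
        have hucp : {x | le c x} ≠ Set.univ := by
          intro h
          exact hca (hantisymm c a ((Set.eq_univ_iff_forall.mp h) a) (hamin c))
        have hmem : ∀ S ∈ [{x | le x c}, {x | le c x}],
            IsSubuniverse ops S ∧ S.Nonempty ∧ S ≠ Set.univ := by
          rintro S hS
          simp only [List.mem_cons, List.mem_singleton, List.not_mem_nil, or_false] at hS
          rcases hS with h | h <;> subst h
          · exact ⟨hdown c, ⟨c, hrefl c⟩, hdcp⟩
          · exact ⟨hup c, ⟨c, hrefl c⟩, hucp⟩
        have hchain : List.Chain' (fun S T : Set A => (S ∩ T).Nonempty)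
            [{x | le x c}, {x | le c x}] := by
          refine List.isChain_cons_cons.mpr ⟨⟨c, hrefl c, hrefl c⟩, List.isChain_singleton _⟩
        have hchain2 : List.Chain' (fun S T : Set A => (S ∩ T).Nonempty)
            [{x | le c x}, {x | le x c}] := by
          refine List.isChain_cons_cons.mpr ⟨⟨c, hrefl c, hrefl c⟩, List.isChain_singleton _⟩
        constructor
        · exact ⟨[{x | le x c}, {x | le c x}], hmem, hchain, by simp,
            hamin c, hbmax c⟩
        · refine ⟨[{x | le c x}, {x | le x c}], ?_, hchain2, by simp,
            hbmax c, hamin c⟩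
          rintro S hS
          simp only [List.mem_cons, List.mem_singleton, List.not_mem_nil, or_false] at hS
          rcases hS with h | h <;> subst h
          · exact ⟨hup c, ⟨c, hrefl c⟩, hucp⟩
          · exact ⟨hdown c, ⟨c, hrefl c⟩, hdcp⟩
  -- reflexivity of HConnected
  have hreflH : ∀ a : A, HConnected ops a a := fun a => (key a a (hrefl a)).1
  intro a b
  have h := hconn a b
  induction h with
  | refl => exact hreflH a
  | tail _ h2 ih =>
      rcases h2 with h2 | h2
      · exact hconn_trans ih (key _ _ h2).1
      · exact hconn_trans ih (key _ _ h2).2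


end UA
end

section
/- Let A be a finite simple idempotent algebra (every congruence of A is the equality relation or the total relation) that possesses a tolerance τ with τ different from both the equality relation and the total relation A × A. Then the hypergraph H(A) is connected: any two elements of A are connected in H(A). -/
namespace UA

variable {ι : Type} {ar : ι → ℕ} {A : Type}

/-- A τ-clique: a set of pairwise τ-related elements. -/
def IsClique (τ : A → A → Prop) (B : Set A) : Prop := ∀ x ∈ B, ∀ y ∈ B, τ x y

lemma exists_maximal_clique [Fintype A] (τ : A → A → Prop) {C : Set A}
    (hC : IsClique τ C) :
    ∃ B : Set A, IsClique τ B ∧ C ⊆ B ∧ ∀ B', IsClique τ B' → B ⊆ B' → B' = B := by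
  obtain ⟨B, hB, hmax⟩ := Set.Finite.exists_maximalFor (id : Set A → Set A)
    {B : Set A | IsClique τ B ∧ C ⊆ B} (Set.toFinite _) ⟨C, hC, subset_rfl⟩
  exact ⟨B, hB.1, hB.2, fun B' hB' hsub => Set.Subset.antisymm (hmax ⟨hB', hB.2.trans hsub⟩ hsub) hsub⟩

lemma maxclique_subuniverse (ops : ∀ i : ι, (Fin (ar i) → A) → A)
    (hidem : Idempotent ops) {τ : A → A → Prop} (hτ : IsTolerance ops τ)
    {B : Set A} (hB : IsClique τ B)
    (hmax : ∀ B', IsClique τ B' → B ⊆ B' → B' = B) :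
    IsSubuniverse ops B := by
  intro i xs hxs
  have hmem : ∀ x ∈ B, τ x (ops i xs) := by
    intro x hx
    have := hτ.2.2 i (fun _ => x) xs (fun k => hB x hx _ (hxs k))
    rwa [hidem i x] at this
  have hcl : IsClique τ (B ∪ {ops i xs}) := by
    rintro x (hx | hx) y (hy | hy)
    · exact hB x hx y hy
    · simp only [Set.mem_singleton_iff] at hy; subst hy; exact hmem x hx
    · simp only [Set.mem_singleton_iff] at hx; subst hx; exact hτ.2.1 _ _ (hmem y hy)
    · simp only [Set.mem_singleton_iff] at hx hy; subst hx; subst hy; exact hτ.1 _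
  have := hmax _ hcl Set.subset_union_left
  rw [← this]
  exact Or.inr rfl

lemma rtg_compat_single (ops : ∀ i : ι, (Fin (ar i) → A) → A)
    {τ : A → A → Prop} (hτ : IsTolerance ops τ) (i : ι) (xs : Fin (ar i) → A)
    (k : Fin (ar i)) {a b : A} (h : Relation.ReflTransGen τ a b) :
    Relation.ReflTransGen τ (ops i (Function.update xs k a))
      (ops i (Function.update xs k b)) := by
  classical
  induction h with
  | refl => exact Relation.ReflTransGen.refl
  | tail _ hcb IH =>
    refine IH.tail (hτ.2.2 i _ _ fun k' => ?_)
    rcases eq_or_ne k' k with rfl | hne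
    · simpa using hcb
    · simp [Function.update_apply, hne, hτ.1]

lemma rtg_compat (ops : ∀ i : ι, (Fin (ar i) → A) → A)
    {τ : A → A → Prop} (hτ : IsTolerance ops τ) (i : ι) (xs ys : Fin (ar i) → A)
    (h : ∀ k, Relation.ReflTransGen τ (xs k) (ys k)) :
    Relation.ReflTransGen τ (ops i xs) (ops i ys) := by
  classical
  have key : ∀ S : Finset (Fin (ar i)),
      Relation.ReflTransGen τ (ops i xs)
        (ops i (fun k => if k ∈ S then ys k else xs k)) := by
    intro S
    induction S using Finset.induction_on with
    | empty => exact Relation.ReflTransGen.refl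
    | @insert a S ha IH =>
      have hfun : (fun k => if k ∈ insert a S then ys k else xs k) =
          Function.update (fun k => if k ∈ S then ys k else xs k) a (ys a) := by
        funext k
        rcases eq_or_ne k a with rfl | hk
        · simp
        · simp [Function.update_apply, hk, Finset.mem_insert]
      rw [hfun]
      have hg : (fun k => if k ∈ S then ys k else xs k) =
          Function.update (fun k => if k ∈ S then ys k else xs k) a (xs a) := by
        funext k
        rcases eq_or_ne k a with rfl | hk
        · simp [ha]
        · simp [Function.update_apply, hk]
      refine IH.trans ?_
      rw [hg]
      have := rtg_compat_single ops hτ i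
        (Function.update (fun k => if k ∈ S then ys k else xs k) a (xs a)) a (h a)
      simpa [Function.update_idem] using this
  have := key Finset.univ
  simpa using this

/-- a finite simple idempotent algebra with a proper nontrivial
tolerance has a connected hypergraph H(A). -/
theorem stmt_4 {ι : Type} {ar : ι → ℕ} {A : Type} [Fintype A] [Nonempty A]
    (ops : ∀ i : ι, (Fin (ar i) → A) → A)
    (hidem : Idempotent ops)
    (hsimple : ∀ θ : A → A → Prop, IsCongruence ops θ →
      (∀ x y, θ x y ↔ x = y) ∨ (∀ x y, θ x y))
    (τ : A → A → Prop) (hτ : IsTolerance ops τ)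
    (hτne_eq : ¬ (∀ x y, τ x y ↔ x = y))
    (hτne_total : ¬ (∀ x y, τ x y)) :
    ∀ a b : A, HConnected ops a b := by
  classical
  -- the reflexive-transitive closure of τ is a congruence
  have hθcong : IsCongruence ops (Relation.ReflTransGen τ) := by
    refine ⟨⟨fun _ => Relation.ReflTransGen.refl,
      fun h => by haveI : Std.Symm τ := ⟨fun _ _ hxy => hτ.2.1 _ _ hxy⟩; exact Relation.ReflTransGen.symmetric.symm _ _ h,
      fun h h' => h.trans h'⟩, fun i xs ys h => rtg_compat ops hτ i xs ys h⟩
  -- it is total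
  have htotal : ∀ x y : A, Relation.ReflTransGen τ x y := by
    rcases hsimple _ hθcong with h | h
    · exfalso
      apply hτne_eq
      intro x y
      constructor
      · intro hxy; exact (h x y).1 (Relation.ReflTransGen.single hxy)
      · rintro rfl; exact hτ.1 x
    · exact h
  -- every maximal clique is a proper nonempty subuniverse
  have hblock : ∀ B : Set A, IsClique τ B →
      (∀ B', IsClique τ B' → B ⊆ B' → B' = B) → B.Nonempty →
      IsSubuniverse ops B ∧ B.Nonempty ∧ B ≠ Set.univ := by
    intro B hB hmax hne
    refine ⟨maxclique_subuniverse ops hidem hτ hB hmax, hne, ?_⟩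
    rintro rfl
    exact hτne_total fun x y => hB x trivial y trivial
  suffices H : ∀ b a : A, Relation.ReflTransGen τ a b → HConnected ops a b from
    fun a b => H b a (htotal a b)
  intro b a hab
  induction hab using Relation.ReflTransGen.head_induction_on with
  | refl =>
    obtain ⟨B, hB, hsub, hmax⟩ := exists_maximal_clique τ
      (C := {b}) (by rintro x rfl y rfl; exact hτ.1 _)
    have hbB : b ∈ B := hsub rfl
    refine ⟨[B], ?_, ?_, ?_⟩
    · intro S hS
      rw [List.mem_singleton] at hS
      subst hS
      exact hblock _ hB hmax ⟨b, hbB⟩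
    · exact List.isChain_singleton _
    · exact ⟨by simp, by simpa using hbB, by simpa using hbB⟩
  | @head a c hac _ IH =>
    obtain ⟨L, hL, hchain, hne, hcL, hbL⟩ := IH
    have hclq : IsClique τ ({a, c} : Set A) := by
      rintro x (rfl | rfl) y (rfl | rfl)
      · exact hτ.1 _
      · exact hac
      · exact hτ.2.1 _ _ hac
      · exact hτ.1 _
    obtain ⟨B, hB, hsub, hmax⟩ := exists_maximal_clique τ hclq
    have haB : a ∈ B := hsub (Or.inl rfl)
    have hcB : c ∈ B := hsub (Or.inr rfl)
    refine ⟨B :: L, ?_, ?_, ?_⟩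
    · intro S hS
      rcases List.mem_cons.1 hS with rfl | hS
      · exact hblock _ hB hmax ⟨a, haB⟩
      · exact hL S hS
    · rw [List.Chain', List.isChain_cons]
      refine ⟨?_, hchain⟩
      intro T hT
      rw [List.head?_eq_head hne, Option.mem_some_iff] at hT
      subst hT
      exact ⟨c, hcB, hcL⟩
    · refine ⟨by simp, by simpa using haB, ?_⟩
      rw [List.getLast_cons hne]
      exact hbL

end UA
end

section
/- Let A be a finite idempotent algebra generated by two elements a and b (A = Sg{a,b}) in which every tolerance is either the equality relation or the total relation, and suppose there is no automorphism φ of A with φ(a) = b and φ(b) = a. Then either a and b are connected in the hypergraph H(A), or there is a binary term operation f of A such that f(a,b) = f(b,a) = b or f(a,b) = f(b,a) = a. -/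
namespace UA

variable {ι : Type} {ar : ι → ℕ} {A : Type}

/-- Renaming of variables in a term. -/
def Term.rename {ι : Type} {ar : ι → ℕ} {n m : ℕ} (σ : Fin n → Fin m) :
    Term ι ar n → Term ι ar m
  | .var j => .var (σ j)
  | .app i ts => .app i (fun k => Term.rename σ (ts k))

theorem Term.eval_rename (ops : ∀ i : ι, (Fin (ar i) → A) → A) {n m : ℕ}
    (σ : Fin n → Fin m) (t : Term ι ar n) (x : Fin m → A) :
    (Term.rename σ t).eval ops x = t.eval ops (x ∘ σ) := by
  induction t with
  | var j => rfl
  | app i ts ih => simp only [Term.rename, Term.eval, ih]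

/-- a tolerance-free finite idempotent algebra generated by `a, b`
with no automorphism swapping `a` and `b`: either `a, b` are connected in `H(A)`,
or there is a binary term operation `f` with `f(a,b) = f(b,a) ∈ {a, b}`. -/
theorem stmt_5 {ι : Type} {ar : ι → ℕ} {A : Type} [Fintype A] [Nonempty A]
    (ops : ∀ i : ι, (Fin (ar i) → A) → A)
    (hidem : Idempotent ops)
    (a b : A)
    (hgen : Sg ops ({a, b} : Set A) = Set.univ)
    (htolfree : ∀ τ : A → A → Prop, IsTolerance ops τ →
      (∀ x y, τ x y ↔ x = y) ∨ (∀ x y, τ x y))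
    (hnoauto : ¬ ∃ φ : A ≃ A,
      (∀ (i : ι) (xs : Fin (ar i) → A), φ (ops i xs) = ops i (fun k => φ (xs k))) ∧
      φ a = b ∧ φ b = a) :
    HConnected ops a b ∨
      ∃ f : A → A → A, IsTermOp2 ops f ∧
        ((f a b = b ∧ f b a = b) ∨ (f a b = a ∧ f b a = a)) := by
  classical
  -- The subalgebra of A² generated by (a,b) and (b,a), as a relation.
  set T : A → A → Prop := fun x y => ∃ t : Term ι ar 2,
    t.eval ops ![a, b] = x ∧ t.eval ops ![b, a] = y with hT
  have Tab : T a b := ⟨.var 0, rfl, rfl⟩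
  have Tba : T b a := ⟨.var 1, rfl, rfl⟩
  have Tsymm : ∀ x y, T x y → T y x := by
    rintro x y ⟨t, h1, h2⟩
    have key : ∀ u v : A, (Term.rename ![1, 0] t).eval ops ![u, v]
        = t.eval ops ![v, u] := by
      intro u v
      rw [Term.eval_rename]
      congr 1
      funext j; fin_cases j <;> rfl
    exact ⟨Term.rename ![1, 0] t, by rw [key]; exact h2, by rw [key]; exact h1⟩
  have Tcomp : ∀ (i : ι) (xs ys : Fin (ar i) → A), (∀ k, T (xs k) (ys k)) →
      T (ops i xs) (ops i ys) := by
    intro i xs ys h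
    choose ts h1 h2 using h
    refine ⟨.app i ts, ?_, ?_⟩
    · show ops i (fun k => (ts k).eval ops ![a, b]) = _
      simp only [h1]
    · show ops i (fun k => (ts k).eval ops ![b, a]) = _
      simp only [h2]
  have Ttotal1 : ∀ x, ∃ y, T x y := by
    intro x
    have hx : x ∈ Sg ops ({a, b} : Set A) := by rw [hgen]; trivial
    have hx2 : x ∈ {z | ∃ t : Term ι ar 2, t.eval ops ![a, b] = z} := by
      refine hx _ ⟨?_, ?_⟩
      · intro i xs hxs
        choose ts hts using hxs
        refine ⟨.app i ts, ?_⟩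
        show ops i (fun k => (ts k).eval ops ![a, b]) = _
        simp only [hts]
      · rintro z (rfl | rfl)
        exacts [⟨.var 0, rfl⟩, ⟨.var 1, rfl⟩]
    obtain ⟨t, ht⟩ := hx2
    exact ⟨t.eval ops ![b, a], t, ht, rfl⟩
  -- If (a,a) ∈ T or (b,b) ∈ T we get the binary term directly.
  by_cases haa : T a a
  · obtain ⟨t, h1, h2⟩ := haa
    exact Or.inr ⟨fun x y => t.eval ops ![x, y], ⟨t, fun _ _ => rfl⟩,
      Or.inr ⟨h1, h2⟩⟩
  by_cases hbb : T b b
  · obtain ⟨t, h1, h2⟩ := hbb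
    exact Or.inr ⟨fun x y => t.eval ops ![x, y], ⟨t, fun _ _ => rfl⟩,
      Or.inl ⟨h1, h2⟩⟩
  -- The tolerance τ = T ∘ T⁻¹.
  set τ : A → A → Prop := fun x z => ∃ y, T x y ∧ T z y with hτ
  have htol : IsTolerance ops τ := by
    refine ⟨fun x => ?_, fun x z ⟨y, h1, h2⟩ => ⟨y, h2, h1⟩, ?_⟩
    · obtain ⟨y, hy⟩ := Ttotal1 x
      exact ⟨y, hy, hy⟩
    · intro i xs zs h
      choose ys h1 h2 using h
      exact ⟨ops i ys, Tcomp i xs ys h1, Tcomp i zs ys h2⟩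
  rcases htolfree τ htol with heq | htot
  · -- τ is equality: T is the graph of an automorphism swapping a and b.
    exfalso
    have Tfun : ∀ x y y', T x y → T x y' → y = y' := by
      intro x y y' h h'
      exact (heq y y').mp ⟨x, Tsymm _ _ h, Tsymm _ _ h'⟩
    choose φ hφ using Ttotal1
    have hinj : Function.Injective φ := by
      intro x x' h
      exact (heq x x').mp ⟨φ x, hφ x, h ▸ hφ x'⟩
    have hbij : Function.Bijective φ := Finite.injective_iff_bijective.mp hinj
    refine hnoauto ⟨Equiv.ofBijective φ hbij, ?_, ?_, ?_⟩
    · intro i xs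
      exact Tfun _ _ _ (hφ (ops i xs)) (Tcomp i xs (fun k => φ (xs k)) fun k => hφ _)
    · exact Tfun _ _ _ (hφ a) Tab
    · exact Tfun _ _ _ (hφ b) Tba
  · -- τ is total: the neighborhoods of a and b give a chain of hyperedges.
    obtain ⟨y, hay, hby⟩ := htot a b
    left
    refine ⟨[{z | T b z}, {z | T a z}], ?_, ?_, ?_⟩
    · have sub : ∀ c : A, IsSubuniverse ops {z | T c z} := by
        intro c i zs hzs
        have := Tcomp i (fun _ => c) zs hzs
        rwa [hidem i c] at this
      have proper : ∀ c : A, ¬ T c c → {z | T c z} ≠ Set.univ := by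
        intro c hc h
        exact hc (show c ∈ {z | T c z} from h ▸ Set.mem_univ c)
      intro S hS
      simp only [List.mem_cons, List.not_mem_nil, or_false] at hS
      rcases hS with h | h
      · exact h ▸ ⟨sub b, ⟨a, Tba⟩, proper b hbb⟩
      · exact h ▸ ⟨sub a, ⟨b, Tab⟩, proper a haa⟩
    · exact List.isChain_cons_cons.mpr ⟨⟨y, hby, hay⟩, List.isChain_singleton _⟩
    · exact ⟨by simp, Tba, Tab⟩

end UA
end

section
/- Let A be a finite idempotent algebra and f a binary term operation of A. Then there exists a binary term operation f′ of A such that f′(x, f′(x,y)) = f′(x,y) for all x,y ∈ A, and such that for all a,b ∈ A and every congruence θ of Sg{a,b}: if f(a,b) θ b and f(b,a) θ b, then f′(a,b) θ b and f′(b,a) θ b. -/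
namespace UA

variable {ι : Type} {ar : ι → ℕ} {A : Type}

/-- Substitution of terms into a term. -/
def Term.subst {ι : Type} {ar : ι → ℕ} {n m : ℕ} :
    Term ι ar n → (Fin n → Term ι ar m) → Term ι ar m
  | .var j, σ => σ j
  | .app i ts, σ => .app i fun k => (ts k).subst σ

lemma Term.eval_subst (ops : ∀ i : ι, (Fin (ar i) → A) → A) {n m : ℕ}
    (t : Term ι ar n) (σ : Fin n → Term ι ar m) (x : Fin m → A) :
    (t.subst σ).eval ops x = t.eval ops fun j => (σ j).eval ops x := by
  induction t with
  | var j => rfl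
  | app i ts ih => exact congrArg (ops i) (funext fun k => ih k)

lemma Term.eval_const (ops : ∀ i : ι, (Fin (ar i) → A) → A) (hidem : Idempotent ops)
    {n : ℕ} (t : Term ι ar n) (x : A) : t.eval ops (fun _ => x) = x := by
  induction t with
  | var j => rfl
  | app i ts ih =>
    have : (fun k => (ts k).eval ops (fun _ => x)) = fun _ => x := funext fun k => ih k
    rw [Term.eval, this, hidem]

lemma congOn_eval {ops : ∀ i : ι, (Fin (ar i) → A) → A} {B : Set A} {θ : A → A → Prop}
    (hθ : IsCongruenceOn ops B θ) {n : ℕ} (t : Term ι ar n) (xs ys : Fin n → A)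
    (h : ∀ j, θ (xs j) (ys j)) : θ (t.eval ops xs) (t.eval ops ys) := by
  induction t with
  | var j => exact h j
  | app i ts ih => exact hθ.2.2.2.2 i _ _ fun k => ih k

/-- every map on a finite set has an idempotent iterate -/
lemma exists_idem_iter [Finite A] (m : A → A) :
    ∃ n, 1 ≤ n ∧ ∀ y, m^[n] (m^[n] y) = m^[n] y := by
  obtain ⟨i, j, hne, hij⟩ := Finite.exists_ne_map_eq_of_infinite (fun k : ℕ => m^[k])
  wlog hlt : i < j generalizing i j
  · exact this j i hne.symm hij.symm (by omega)
  set p := j - i with hp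
  have hp1 : 1 ≤ p := by omega
  have key : ∀ s y, m^[i + p + s] y = m^[i + s] y := by
    intro s y
    have h1 : i + p + s = s + j := by omega
    have h2 : i + s = s + i := by omega
    rw [h1, h2, Function.iterate_add_apply, Function.iterate_add_apply, hij]
  have key2 : ∀ c s y, m^[i + c * p + s] y = m^[i + s] y := by
    intro c
    induction c with
    | zero => simp
    | succ c ih =>
      intro s y
      have h : i + (c + 1) * p + s = i + c * p + (p + s) := by ring
      rw [h, ih (p + s) y]
      have h2 : i + (p + s) = i + p + s := by omega
      rw [h2, key]
  have hge : i + 1 ≤ (i + 1) * p := by nlinarith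
  refine ⟨(i + 1) * p, by omega, fun y => ?_⟩
  have h1 : (i+1)*p + ((i+1)*p) = i + (i+1) * p + ((i+1)*p - i) := by omega
  have h2 : (i+1)*p = i + ((i+1)*p - i) := by omega
  calc m^[(i+1)*p] (m^[(i+1)*p] y) = m^[(i+1)*p + (i+1)*p] y := by
        rw [Function.iterate_add_apply]
    _ = m^[i + (i+1)*p + ((i+1)*p - i)] y := by rw [h1]
    _ = m^[i + ((i+1)*p - i)] y := key2 _ _ y
    _ = m^[(i+1)*p] y := by rw [← h2]

/-- a uniform idempotent iterate exponent for all self-maps of a finite set -/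
lemma exists_uniform_idem_iter [Finite A] :
    ∃ N, 1 ≤ N ∧ ∀ (m : A → A) (y : A), m^[N] (m^[N] y) = m^[N] y := by
  letI := Fintype.ofFinite A
  letI := Classical.decEq A
  choose n hn1 hn2 using fun m : A → A => exists_idem_iter m
  refine ⟨∏ m : A → A, n m, Finset.one_le_prod' fun m _ => hn1 m, fun m y => ?_⟩
  obtain ⟨k, hk⟩ := Finset.dvd_prod_of_mem n (Finset.mem_univ m)
  have hN1 : 1 ≤ ∏ m : A → A, n m := Finset.one_le_prod' fun m _ => hn1 m
  have hk1 : 1 ≤ k := by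
    rcases Nat.eq_zero_or_pos k with h | h
    · subst h; simp at hk; omega
    · exact h
  have hiter : ∀ z, m^[∏ m : A → A, n m] z = m^[n m] z := by
    intro z
    rw [hk, Function.iterate_mul]
    obtain ⟨k', rfl⟩ : ∃ k', k = k' + 1 := ⟨k - 1, by omega⟩
    clear hk hk1
    induction k' with
    | zero => rfl
    | succ k' ih =>
      rw [Function.iterate_succ_apply']
      rw [ih]
      exact hn2 m z
  rw [hiter, hiter, hn2]

/-- iterated composition in the second variable, as a term -/
def iterTerm {ι : Type} {ar : ι → ℕ} (t : Term ι ar 2) : ℕ → Term ι ar 2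
  | 0 => .var 1
  | k+1 => t.subst ![.var 0, iterTerm t k]

lemma iterTerm_eval (ops : ∀ i : ι, (Fin (ar i) → A) → A) (t : Term ι ar 2)
    (f : A → A → A) (ht : ∀ x y, f x y = t.eval ops ![x, y]) :
    ∀ (k : ℕ) (x y : A), (iterTerm t k).eval ops ![x, y] = (f x)^[k] y := by
  intro k x y
  induction k with
  | zero => rfl
  | succ k ih =>
    rw [iterTerm, Term.eval_subst]
    have : (fun j => (![Term.var 0, iterTerm t k] j).eval ops ![x, y])
        = ![x, (f x)^[k] y] := by
      funext j
      fin_cases j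
      · rfl
      · exact ih
    rw [this, Function.iterate_succ_apply', ht]

/-- any binary term operation can be improved to one satisfying
`f'(x, f'(x,y)) = f'(x,y)` while keeping its semilattice behaviour modulo any
congruence of any 2-generated subalgebra. -/
theorem stmt_6 {ι : Type} {ar : ι → ℕ} {A : Type} [Fintype A] [Nonempty A]
    (ops : ∀ i : ι, (Fin (ar i) → A) → A)
    (hidem : Idempotent ops)
    (f : A → A → A) (hf : IsTermOp2 ops f) :
    ∃ f' : A → A → A, IsTermOp2 ops f' ∧
      (∀ x y : A, f' x (f' x y) = f' x y) ∧
      ∀ (a b : A) (θ : A → A → Prop),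
        IsCongruenceOn ops (Sg ops ({a, b} : Set A)) θ →
        θ (f a b) b → θ (f b a) b →
        θ (f' a b) b ∧ θ (f' b a) b := by
  obtain ⟨N, hN1, hNidem⟩ := exists_uniform_idem_iter (A := A)
  obtain ⟨t, ht⟩ := hf
  refine ⟨fun x y => (f x)^[N] y, ⟨iterTerm t N, fun x y => (iterTerm_eval ops t f ht N x y).symm⟩,
    fun x y => hNidem (f x) y, ?_⟩
  intro a b θ hθ h1 h2
  have haS : a ∈ Sg ops ({a, b} : Set A) := fun S hS => hS.2 (Or.inl rfl)
  have hbS : b ∈ Sg ops ({a, b} : Set A) := fun S hS => hS.2 (Or.inr rfl)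
  have hθa : θ a a := hθ.2.1 a haS
  have hθb : θ b b := hθ.2.1 b hbS
  have htrans : ∀ x y z, θ x y → θ y z → θ x z := hθ.2.2.2.1
  have hcompat : ∀ x y x' y', θ x x' → θ y y' → θ (f x y) (f x' y') := by
    intro x y x' y' hx hy
    rw [ht, ht]
    refine congOn_eval hθ t ![x, y] ![x', y'] fun j => ?_
    fin_cases j
    · exact hx
    · exact hy
  have hfbb : f b b = b := by
    rw [ht]
    have : (![b, b] : Fin 2 → A) = fun _ => b := by
      funext j; fin_cases j <;> rfl
    rw [this]
    exact Term.eval_const ops hidem t b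
  constructor
  · -- θ ((f a)^[N] b) b
    have claim : ∀ k, θ ((f a)^[k] b) b := by
      intro k
      induction k with
      | zero => exact hθb
      | succ k ih =>
        rw [Function.iterate_succ_apply']
        exact htrans _ _ _ (hcompat a _ a b hθa ih) h1
    exact claim N
  · -- θ ((f b)^[N] a) b
    have claim : ∀ k, θ ((f b)^[k + 1] a) b := by
      intro k
      induction k with
      | zero => simpa using h2
      | succ k ih =>
        rw [Function.iterate_succ_apply']
        have := hcompat b _ b b hθb ih
        rw [hfbb] at this
        exact this
    obtain ⟨N', rfl⟩ : ∃ N', N = N' + 1 := ⟨N - 1, by omega⟩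
    exact claim N'


end UA
end

section
/- Let A be a finite idempotent algebra, a,b ∈ A, B = Sg{a,b}, and θ a congruence of B with a^θ ≠ b^θ. Let f be a binary term operation of A such that: (i) f(x,y) θ b and f(y,x) θ b for all x ∈ a^θ and y ∈ b^θ; and (ii) for all x,y ∈ A, either f(x,y) = x or the element c = f(x,y) satisfies f(x,c) = f(c,x) = c. Then for every c ∈ a^θ there exists d ∈ b^θ such that f(c,d) = f(d,c) = d. -/
namespace UA

variable {ι : Type} {ar : ι → ℕ} {A : Type}

/-- from a thick semilattice edge witnessed by `θ` on `Sg{a,b}`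
and a good operation `f`, every `c ∈ a^θ` has `d ∈ b^θ` with
`f(c,d) = f(d,c) = d` (a thin semilattice edge). -/
theorem stmt_12 {ι : Type} {ar : ι → ℕ} {A : Type} [Fintype A] [Nonempty A]
    (ops : ∀ i : ι, (Fin (ar i) → A) → A)
    (hidem : Idempotent ops)
    (a b : A) (θ : A → A → Prop)
    (hθ : IsCongruenceOn ops (Sg ops ({a, b} : Set A)) θ)
    (hneq : ¬ θ a b)
    (f : A → A → A) (hf : IsTermOp2 ops f)
    (hsl : ∀ x, θ a x → ∀ y, θ b y → θ (f x y) b ∧ θ (f y x) b)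
    (hgood : ∀ x y : A, f x y = x ∨
      (f x (f x y) = f x y ∧ f (f x y) x = f x y)) :
    ∀ c, θ a c → ∃ d, θ b d ∧ f c d = d ∧ f d c = d := by
  intro c hac
  obtain ⟨hdom, hrefl, hsymm, htrans, _⟩ := hθ
  have hbB : b ∈ Sg ops ({a, b} : Set A) := fun S hS => hS.2 (by simp)
  have hbb : θ b b := hrefl b hbB
  have hfb : θ (f c b) b := (hsl c hac b hbb).1
  rcases hgood c b with h | ⟨h1, h2⟩
  · exact absurd (htrans a c b hac (h ▸ hfb)) hneq
  · exact ⟨f c b, hsymm _ _ hfb, h1, h2⟩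

end UA
end

section
/- Let A be a finite idempotent algebra and f a binary term operation of A such that for all x,y ∈ A, either f(x,y) = x or the element c = f(x,y) satisfies f(x,c) = f(c,x) = c. Let R be a subuniverse of A × A with pr_1 R = pr_2 R = A, let S = {(c,d) ∈ A² : there is e ∈ A with (e,c) ∈ R and (e,d) ∈ R}, and assume the transitive closure of S is the total relation A × A. Then for any f-maximal elements a,b ∈ A there exist a sequence a = d_1, d_2, …, d_k and elements a_1,…,a_{k-1} ∈ A such that for every i < k: (d_i, d_{i+1}) ∈ S, (a_i, d_i) ∈ R, and (a_i, d_{i+1}) ∈ R; every d_i and every a_i is f-maximal; and d_k lies in the same strongly connected component of G_f as b. -/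
namespace UA

variable {ι : Type} {ar : ι → ℕ} {A : Type}

/-- The arc relation of the digraph `G_f`: `c → d` iff `f(c,d) = f(d,c) = d`. -/
def Arc {A : Type} (f : A → A → A) (c d : A) : Prop :=
  f c d = d ∧ f d c = d

/-- Reachability in `G_f`. -/
def Reach {A : Type} (f : A → A → A) : A → A → Prop :=
  Relation.ReflTransGen (Arc f)

/-- `a` is `f`-maximal: its strongly connected component in `G_f` has no arc
leaving it into a different component, i.e., everything reachable from `a`
reaches back to `a`. -/
def FMax {A : Type} (f : A → A → A) (a : A) : Prop :=
  ∀ x, Reach f a x → Reach f x a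

section Proof18

variable {ι : Type} {ar : ι → ℕ} {A : Type}

theorem eval_pair_mem (ops : ∀ i : ι, (Fin (ar i) → A) → A) (R : Set (A × A))
    (hRsub : ∀ (i : ι) (ps : Fin (ar i) → A × A), (∀ k, ps k ∈ R) →
      (ops i (fun k => (ps k).1), ops i (fun k => (ps k).2)) ∈ R)
    {n : ℕ} (t : Term ι ar n) (v : Fin n → A × A) (hv : ∀ j, v j ∈ R) :
    (t.eval ops (fun j => (v j).1), t.eval ops (fun j => (v j).2)) ∈ R := by
  induction t with
  | var j => simpa [Term.eval] using hv j
  | app i ts ih =>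
      simp only [Term.eval]
      exact hRsub i (fun k => ((ts k).eval ops (fun j => (v j).1),
        (ts k).eval ops (fun j => (v j).2))) (fun k => ih k)

theorem f_pair_mem (ops : ∀ i : ι, (Fin (ar i) → A) → A) (R : Set (A × A))
    (hRsub : ∀ (i : ι) (ps : Fin (ar i) → A × A), (∀ k, ps k ∈ R) →
      (ops i (fun k => (ps k).1), ops i (fun k => (ps k).2)) ∈ R)
    {f : A → A → A} (hf : IsTermOp2 ops f)
    {w d z u : A} (h1 : (w, d) ∈ R) (h2 : (z, u) ∈ R) : (f w z, f d u) ∈ R := by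
  obtain ⟨t, ht⟩ := hf
  have key := eval_pair_mem ops R hRsub t ![(w, d), (z, u)]
    (by intro j; fin_cases j <;> assumption)
  have e1 : (fun j => ((![(w, d), (z, u)] : Fin 2 → A × A) j).1) = ![w, z] := by
    funext j; fin_cases j <;> rfl
  have e2 : (fun j => ((![(w, d), (z, u)] : Fin 2 → A × A) j).2) = ![d, u] := by
    funext j; fin_cases j <;> rfl
  rw [e1, e2] at key
  rw [ht w z, ht d u]
  exact key

theorem reach_mul {f : A → A → A}
    (hgood : ∀ x y : A, f x y = x ∨ (f x (f x y) = f x y ∧ f (f x y) x = f x y))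
    (x y : A) : Reach f x (f x y) := by
  rcases hgood x y with h | h
  · rw [h]; exact Relation.ReflTransGen.refl
  · exact Relation.ReflTransGen.single h

theorem fmax_reach {f : A → A → A} {a c : A} (ha : FMax f a) (h : Reach f a c) :
    FMax f c := fun x hx => (ha x (h.trans hx)).trans h

noncomputable def mu (f : A → A → A) (x : A) : ℕ := {y | Reach f x y}.ncard

theorem mu_le [Fintype A] {f : A → A → A} {x z : A} (h : Reach f x z) :
    mu f z ≤ mu f x :=
  Set.ncard_le_ncard (fun y hy => h.trans hy) (Set.toFinite _)

theorem mu_lt [Fintype A] {f : A → A → A} {x z : A} (h : Reach f x z)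
    (h2 : ¬ Reach f z x) : mu f z < mu f x :=
  Set.ncard_lt_ncard ((Set.ssubset_iff_of_subset (fun y hy => h.trans hy)).2
    ⟨x, Relation.ReflTransGen.refl, h2⟩) (Set.toFinite _)

theorem mu_pos [Fintype A] {f : A → A → A} (x : A) : 0 < mu f x :=
  (Set.ncard_pos (Set.toFinite _)).2 ⟨x, Relation.ReflTransGen.refl⟩

def Cfg (R : Set (A × A)) (k : ℕ) (d : Fin (k + 1) → A) (w : Fin k → A) : Prop :=
  ∀ i : Fin k, (w i, d i.castSucc) ∈ R ∧ (w i, d i.succ) ∈ R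

theorem mult_d (ops : ∀ i : ι, (Fin (ar i) → A) → A) (R : Set (A × A))
    (hRsub : ∀ (i : ι) (ps : Fin (ar i) → A × A), (∀ k, ps k ∈ R) →
      (ops i (fun k => (ps k).1), ops i (fun k => (ps k).2)) ∈ R)
    {f : A → A → A} (hf : IsTermOp2 ops f)
    (hgood : ∀ x y : A, f x y = x ∨ (f x (f x y) = f x y ∧ f (f x y) x = f x y))
    (hpr2 : ∀ x : A, ∃ p ∈ R, p.2 = x)
    {x z : A} (hxz : Reach f x z) :
    ∃ g h : A → A, g x = z ∧ (∀ v, Reach f v (g v)) ∧ (∀ v, Reach f v (h v)) ∧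
      ∀ w d : A, (w, d) ∈ R → (h w, g d) ∈ R := by
  induction hxz using Relation.ReflTransGen.head_induction_on with
  | refl =>
      exact ⟨id, id, rfl, fun v => Relation.ReflTransGen.refl,
        fun v => Relation.ReflTransGen.refl, fun w d hh => hh⟩
  | @head x₀ c harc hrest ih =>
      obtain ⟨g, h, hg, hgr, hhr, hRp⟩ := ih
      obtain ⟨p, hp, rfl⟩ := hpr2 c
      refine ⟨fun v => g (f v p.2), fun v => h (f v p.1), ?_, ?_, ?_, ?_⟩
      · show g (f x₀ p.2) = z
        rw [harc.1]; exact hg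
      · intro v; exact (reach_mul hgood v p.2).trans (hgr _)
      · intro v; exact (reach_mul hgood v p.1).trans (hhr _)
      · intro w d hwd
        exact hRp _ _ (f_pair_mem ops R hRsub hf hwd hp)

theorem mult_w (ops : ∀ i : ι, (Fin (ar i) → A) → A) (R : Set (A × A))
    (hRsub : ∀ (i : ι) (ps : Fin (ar i) → A × A), (∀ k, ps k ∈ R) →
      (ops i (fun k => (ps k).1), ops i (fun k => (ps k).2)) ∈ R)
    {f : A → A → A} (hf : IsTermOp2 ops f)
    (hgood : ∀ x y : A, f x y = x ∨ (f x (f x y) = f x y ∧ f (f x y) x = f x y))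
    (hpr1 : ∀ x : A, ∃ p ∈ R, p.1 = x)
    {x z : A} (hxz : Reach f x z) :
    ∃ g h : A → A, h x = z ∧ (∀ v, Reach f v (g v)) ∧ (∀ v, Reach f v (h v)) ∧
      ∀ w d : A, (w, d) ∈ R → (h w, g d) ∈ R := by
  induction hxz using Relation.ReflTransGen.head_induction_on with
  | refl =>
      exact ⟨id, id, rfl, fun v => Relation.ReflTransGen.refl,
        fun v => Relation.ReflTransGen.refl, fun w d hh => hh⟩
  | @head x₀ c harc hrest ih =>
      obtain ⟨g, h, hg, hgr, hhr, hRp⟩ := ih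
      obtain ⟨p, hp, rfl⟩ := hpr1 c
      refine ⟨fun v => g (f v p.2), fun v => h (f v p.1), ?_, ?_, ?_, ?_⟩
      · show h (f x₀ p.1) = z
        rw [harc.1]; exact hg
      · intro v; exact (reach_mul hgood v p.2).trans (hgr _)
      · intro v; exact (reach_mul hgood v p.1).trans (hhr _)
      · intro w d hwd
        exact hRp _ _ (f_pair_mem ops R hRsub hf hwd hp)

theorem improve [Fintype A] (ops : ∀ i : ι, (Fin (ar i) → A) → A) (R : Set (A × A))
    (hRsub : ∀ (i : ι) (ps : Fin (ar i) → A × A), (∀ k, ps k ∈ R) →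
      (ops i (fun k => (ps k).1), ops i (fun k => (ps k).2)) ∈ R)
    {f : A → A → A} (hf : IsTermOp2 ops f)
    (hgood : ∀ x y : A, f x y = x ∨ (f x (f x y) = f x y ∧ f (f x y) x = f x y))
    (hpr1 : ∀ x : A, ∃ p ∈ R, p.1 = x)
    (hpr2 : ∀ x : A, ∃ p ∈ R, p.2 = x) :
    ∀ (N k : ℕ) (d : Fin (k + 1) → A) (w : Fin k → A), Cfg R k d w →
      ((∑ i, mu f (d i)) + ∑ i, mu f (w i)) ≤ N →
      ∃ (d' : Fin (k + 1) → A) (w' : Fin k → A), Cfg R k d' w' ∧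
        (∀ i, Reach f (d i) (d' i)) ∧ (∀ i, Reach f (w i) (w' i)) ∧
        (∀ i, FMax f (d' i)) ∧ (∀ i, FMax f (w' i)) := by
  intro N
  induction N with
  | zero =>
      intro k d w hcfg hle
      exfalso
      have h1 : 0 < ∑ i, mu f (d i) :=
        Finset.sum_pos (fun i _ => mu_pos (d i)) ⟨0, Finset.mem_univ 0⟩
      omega
  | succ N IH =>
      intro k d w hcfg hle
      by_cases hd : ∀ i, FMax f (d i)
      · by_cases hw : ∀ i, FMax f (w i)
        · exact ⟨d, w, hcfg, fun i => Relation.ReflTransGen.refl,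
            fun i => Relation.ReflTransGen.refl, hd, hw⟩
        · push_neg at hw
          obtain ⟨i0, hi0⟩ := hw
          simp only [FMax] at hi0
          push_neg at hi0
          obtain ⟨z, hxz, hzx⟩ := hi0
          obtain ⟨g, h, hh, hgr, hhr, hRp⟩ := mult_w ops R hRsub hf hgood hpr1 hxz
          have hcfg1 : Cfg R k (fun i => g (d i)) (fun i => h (w i)) :=
            fun i => ⟨hRp _ _ (hcfg i).1, hRp _ _ (hcfg i).2⟩
          have hle1 : ((∑ i, mu f (g (d i))) + ∑ i, mu f (h (w i))) ≤ N := by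
            have h1 : ∑ i, mu f (g (d i)) ≤ ∑ i, mu f (d i) :=
              Finset.sum_le_sum (fun i _ => mu_le (hgr _))
            have h2 : ∑ i, mu f (h (w i)) < ∑ i, mu f (w i) := by
              refine Finset.sum_lt_sum (fun i _ => mu_le (hhr _))
                ⟨i0, Finset.mem_univ _, ?_⟩
              rw [hh]; exact mu_lt hxz hzx
            omega
          obtain ⟨d', w', hcfg2, hr1, hr2, hm1, hm2⟩ := IH k _ _ hcfg1 hle1
          exact ⟨d', w', hcfg2, fun i => (hgr (d i)).trans (hr1 i),
            fun i => (hhr (w i)).trans (hr2 i), hm1, hm2⟩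
      · push_neg at hd
        obtain ⟨i0, hi0⟩ := hd
        simp only [FMax] at hi0
        push_neg at hi0
        obtain ⟨z, hxz, hzx⟩ := hi0
        obtain ⟨g, h, hg, hgr, hhr, hRp⟩ := mult_d ops R hRsub hf hgood hpr2 hxz
        have hcfg1 : Cfg R k (fun i => g (d i)) (fun i => h (w i)) :=
          fun i => ⟨hRp _ _ (hcfg i).1, hRp _ _ (hcfg i).2⟩
        have hle1 : ((∑ i, mu f (g (d i))) + ∑ i, mu f (h (w i))) ≤ N := by
          have h1 : ∑ i, mu f (h (w i)) ≤ ∑ i, mu f (w i) :=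
            Finset.sum_le_sum (fun i _ => mu_le (hhr _))
          have h2 : ∑ i, mu f (g (d i)) < ∑ i, mu f (d i) := by
            refine Finset.sum_lt_sum (fun i _ => mu_le (hgr _))
              ⟨i0, Finset.mem_univ _, ?_⟩
            rw [hg]; exact mu_lt hxz hzx
          omega
        obtain ⟨d', w', hcfg2, hr1, hr2, hm1, hm2⟩ := IH k _ _ hcfg1 hle1
        exact ⟨d', w', hcfg2, fun i => (hgr (d i)).trans (hr1 i),
          fun i => (hhr (w i)).trans (hr2 i), hm1, hm2⟩

theorem init_chain (R : Set (A × A)) (S : A → A → Prop)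
    (hS : ∀ x y, S x y ↔ ∃ e, (e, x) ∈ R ∧ (e, y) ∈ R)
    {a b : A} (hab : Relation.TransGen S a b) :
    ∃ (k : ℕ) (d : Fin (k + 1) → A) (w : Fin k → A),
      Cfg R k d w ∧ d 0 = a ∧ d (Fin.last k) = b := by
  induction hab with
  | @single b' hstep =>
      obtain ⟨e, he1, he2⟩ := (hS _ _).1 hstep
      refine ⟨1, ![a, b'], ![e], ?_, rfl, rfl⟩
      intro i
      have : i = 0 := Subsingleton.elim i 0
      subst this
      exact ⟨he1, he2⟩
  | @tail c b' hrest hstep ih =>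
      obtain ⟨k, d, w, hcfg, hd0, hdl⟩ := ih
      obtain ⟨e, he1, he2⟩ := (hS _ _).1 hstep
      refine ⟨k + 1, Fin.snoc d b', Fin.snoc w e, ?_, ?_, ?_⟩
      · intro i
        refine Fin.lastCases ?_ (fun j => ?_) i
        · constructor
          · rw [Fin.snoc_last, Fin.snoc_castSucc, hdl]; exact he1
          · rw [Fin.snoc_last, Fin.succ_last, Fin.snoc_last]; exact he2
        · constructor
          · rw [Fin.snoc_castSucc, Fin.snoc_castSucc]; exact (hcfg j).1
          · rw [Fin.snoc_castSucc, Fin.succ_castSucc, Fin.snoc_castSucc]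
            exact (hcfg j).2
      · simp only [← Fin.castSucc_zero, Fin.snoc_castSucc]
        exact hd0
      · exact Fin.snoc_last _ _

end Proof18

/-- going to maximal elements along a linked chain in a subdirect
square. -/
theorem stmt_18 {ι : Type} {ar : ι → ℕ} {A : Type} [Fintype A] [Nonempty A]
    (ops : ∀ i : ι, (Fin (ar i) → A) → A)
    (hidem : Idempotent ops)
    (f : A → A → A) (hf : IsTermOp2 ops f)
    (hgood : ∀ x y : A, f x y = x ∨
      (f x (f x y) = f x y ∧ f (f x y) x = f x y))
    (R : Set (A × A))
    (hRsub : ∀ (i : ι) (ps : Fin (ar i) → A × A), (∀ k, ps k ∈ R) →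
      (ops i (fun k => (ps k).1), ops i (fun k => (ps k).2)) ∈ R)
    (hpr1 : ∀ x : A, ∃ p ∈ R, p.1 = x)
    (hpr2 : ∀ x : A, ∃ p ∈ R, p.2 = x)
    (S : A → A → Prop)
    (hS : ∀ x y, S x y ↔ ∃ e, (e, x) ∈ R ∧ (e, y) ∈ R)
    (hStc : ∀ x y : A, Relation.TransGen S x y)
    (a b : A) (ha : FMax f a) (hb : FMax f b) :
    ∃ (k : ℕ) (d : Fin (k + 1) → A) (as : Fin k → A),
      d 0 = a ∧
      (∀ i : Fin k, S (d i.castSucc) (d i.succ) ∧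
        (as i, d i.castSucc) ∈ R ∧ (as i, d i.succ) ∈ R) ∧
      (∀ i, FMax f (d i)) ∧ (∀ i, FMax f (as i)) ∧
      Reach f (d (Fin.last k)) b ∧ Reach f b (d (Fin.last k)) := by
  classical
  obtain ⟨k, d0, w0, hcfg0, hd0, hdl⟩ := init_chain R S hS (hStc a b)
  obtain ⟨d1, w1, hcfg1, hr1, hr2, hm1, hm2⟩ :=
    improve ops R hRsub hf hgood hpr1 hpr2
      ((∑ i, mu f (d0 i)) + ∑ i, mu f (w0 i)) k d0 w0 hcfg0 le_rfl
  have hra : Reach f (d1 0) a := by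
    have h0 : Reach f a (d1 0) := by
      have := hr1 0; rwa [hd0] at this
    exact ha _ h0
  obtain ⟨g, h, hg, hgr, hhr, hRp⟩ := mult_d ops R hRsub hf hgood hpr2 hra
  have hcfg2 : Cfg R k (fun i => g (d1 i)) (fun i => h (w1 i)) :=
    fun i => ⟨hRp _ _ (hcfg1 i).1, hRp _ _ (hcfg1 i).2⟩
  have hrb : Reach f b (g (d1 (Fin.last k))) := by
    have h0 : Reach f b (d1 (Fin.last k)) := by
      have := hr1 (Fin.last k); rwa [hdl] at this
    exact h0.trans (hgr _)
  refine ⟨k, fun i => g (d1 i), fun i => h (w1 i), hg, ?_, ?_, ?_, hb _ hrb, hrb⟩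
  · intro i
    exact ⟨(hS _ _).2 ⟨h (w1 i), (hcfg2 i).1, (hcfg2 i).2⟩, (hcfg2 i).1, (hcfg2 i).2⟩
  · intro i; exact fmax_reach (hm1 i) (hgr _)
  · intro i; exact fmax_reach (hm2 i) (hhr _)


end UA
end
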